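/- arXiv:2412.05674 — 3 statements merged into one kernel-verified Lean document; each statement's English description precedes it below -/
import Mathlib

section
/- Let T be the 2×2 matrix with diagonal entries (D²d−1)/(D²d³−d) and off-diagonal entries (Dd−D)/(D²d³−d), and let S = diag(d,1). Then tr[(S·T)^n] = 1/d^n + ((D²−1)/(D²d²−1))^n for all positive integers n. -/
set_option maxHeartbeats 2000000


/-- Transfer-matrix identity for the 1D MPS second-moment computation:
with `T` the symmetric transfer matrix and `S = diag(d,1)`,
`tr[(S·T)^n] = 1/d^n + ((D²−1)/(D²d²−1))^n`. -/
theorem trace_S_transfer_pow (D d : ℕ) (hD : 2 ≤ D) (hd : 2 ≤ d) (n : ℕ) (hn : 0 < n) :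
    let Dr : ℝ := (D : ℝ)
    let dr : ℝ := (d : ℝ)
    let T : Matrix (Fin 2) (Fin 2) ℝ :=
      !![(Dr ^ 2 * dr - 1) / (Dr ^ 2 * dr ^ 3 - dr), (Dr * dr - Dr) / (Dr ^ 2 * dr ^ 3 - dr);
         (Dr * dr - Dr) / (Dr ^ 2 * dr ^ 3 - dr), (Dr ^ 2 * dr - 1) / (Dr ^ 2 * dr ^ 3 - dr)]
    let S : Matrix (Fin 2) (Fin 2) ℝ := !![dr, 0; 0, 1]
    ((S * T) ^ n).trace = 1 / dr ^ n + ((Dr ^ 2 - 1) / (Dr ^ 2 * dr ^ 2 - 1)) ^ n := by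
  intro Dr dr T S
  have hD2 : (2:ℝ) ≤ Dr := by show (2:ℝ) ≤ (D:ℝ); exact_mod_cast hD
  have hd2 : (2:ℝ) ≤ dr := by show (2:ℝ) ≤ (d:ℝ); exact_mod_cast hd
  have h4 : (4:ℝ) ≤ Dr ^ 2 := by nlinarith
  have hdd : (4:ℝ) ≤ dr ^ 2 := by nlinarith
  have h8 : (8:ℝ) ≤ dr ^ 3 := by nlinarith [mul_le_mul hd2 hdd (by norm_num : (0:ℝ) ≤ 4) (by linarith : (0:ℝ) ≤ dr)]
  have hden : Dr ^ 2 * dr ^ 3 - dr ≠ 0 := by nlinarith [mul_le_mul h4 h8 (by norm_num : (0:ℝ) ≤ 8) (by linarith : (0:ℝ) ≤ Dr ^ 2)]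
  have hden2 : Dr ^ 2 * dr ^ 2 - 1 ≠ 0 := by nlinarith [mul_le_mul h4 hdd (by norm_num : (0:ℝ) ≤ 4) (by linarith : (0:ℝ) ≤ Dr ^ 2)]
  have hk : Dr ^ 2 * dr + 1 ≠ 0 := by nlinarith
  have hdr : dr ≠ 0 := by intro h; rw [h] at hd2; linarith
  set k : ℝ := Dr ^ 2 * dr + 1 with hkdef
  set l1 : ℝ := 1 / dr with hl1
  set l2 : ℝ := (Dr ^ 2 - 1) / (Dr ^ 2 * dr ^ 2 - 1) with hl2
  set A : Matrix (Fin 2) (Fin 2) ℝ := !![Dr^2*dr/k, Dr*dr/k; Dr/k, 1/k] with hA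
  set B : Matrix (Fin 2) (Fin 2) ℝ := !![1/k, -(Dr*dr)/k; -Dr/k, Dr^2*dr/k] with hB
  have hMA : A * (S * T) = l1 • A := by
    ext i j
    fin_cases i <;> fin_cases j <;>
      simp [hA, hB, T, S, hl1, hl2, hkdef, Matrix.mul_apply, Fin.sum_univ_two] <;>
      field_simp <;> ring
  have hMB : B * (S * T) = l2 • B := by
    ext i j
    fin_cases i <;> fin_cases j <;>
      simp [hA, hB, T, S, hl1, hl2, hkdef, Matrix.mul_apply, Fin.sum_univ_two] <;>
      field_simp <;> ring
  have hM : ∀ m : ℕ, (S * T) ^ m = l1 ^ m • A + l2 ^ m • B := by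
    intro m
    induction m with
    | zero =>
      simp only [pow_zero, one_smul]
      ext i j
      fin_cases i <;> fin_cases j <;>
        simp [hA, hB, Matrix.one_apply, hkdef] <;> field_simp <;> ring
    | succ m ih =>
      rw [pow_succ, ih, Matrix.add_mul, Matrix.smul_mul, Matrix.smul_mul, hMA, hMB,
        smul_smul, smul_smul, ← pow_succ, ← pow_succ]
  rw [hM n, Matrix.trace_add, Matrix.trace_smul, Matrix.trace_smul]
  have htrA : A.trace = 1 := by
    rw [hA, Matrix.trace_fin_two]
    show Dr ^ 2 * dr / k + 1 / k = 1
    rw [← add_div, ← hkdef]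
    exact div_self hk
  have htrB : B.trace = 1 := by
    rw [hB, Matrix.trace_fin_two]
    show 1 / k + Dr ^ 2 * dr / k = 1
    rw [← add_div, add_comm, ← hkdef]
    exact div_self hk
  rw [htrA, htrB, smul_eq_mul, smul_eq_mul, mul_one, mul_one, hl1, hl2, div_pow, one_pow]
end

section
/- In the supervised task of learning an N-dimensional unitary with risk R_U(V) = 1 − (N + |tr(U†V)|²)/(N(N+1)), if the training set consists of t orthonormal states learned perfectly (so that U†V = e^{iθ₁}⊕…⊕e^{iθ_t}⊕Y with Y a Haar-random unitary on the complement), then the average risk over Y is at least 1 − (N + t² + 1)/(N(N+1)). -/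
set_option linter.unusedSectionVars false
open MeasureTheory Matrix Complex

section
variable {n : ℕ} [MeasurableSpace (Matrix.unitaryGroup (Fin n) ℂ)]
  [BorelSpace (Matrix.unitaryGroup (Fin n) ℂ)]
  (μ : Measure (Matrix.unitaryGroup (Fin n) ℂ))
  [μ.IsHaarMeasure] [IsProbabilityMeasure μ]

local notation "UG" => Matrix.unitaryGroup (Fin n) ℂ
local notation "M'" => Matrix (Fin n) (Fin n) ℂ

theorem cont_ent (i j : Fin n) : Continuous fun Y : UG => (Y : M') i j :=
  Continuous.matrix_elem continuous_subtype_val i j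

theorem ent_norm_le (Y : UG) (i j : Fin n) : ‖(Y : M') i j‖ ≤ 1 := by
  have h2 := Y.2.1
  have h : (star (Y : M') * (Y : M')) j j = 1 := by rw [h2]; simp
  rw [Matrix.mul_apply] at h
  have hre := congrArg Complex.re h
  rw [Complex.re_sum] at hre
  have hterm : ∀ k, ((star (Y : M')) j k * (Y : M') k j).re = Complex.normSq ((Y : M') k j) := by
    intro k
    rw [Matrix.star_apply, Complex.star_def, ← Complex.normSq_eq_conj_mul_self,
      Complex.ofReal_re]
  simp only [hterm] at hre
  have hle : Complex.normSq ((Y : M') i j) ≤ 1 := by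
    rw [Complex.one_re] at hre
    rw [← hre]
    exact Finset.single_le_sum (f := fun k => Complex.normSq ((Y : M') k j))
      (fun k _ => Complex.normSq_nonneg _) (Finset.mem_univ i)
  have := Complex.sq_norm ((Y : M') i j)
  nlinarith [norm_nonneg ((Y : M') i j)]

theorem integrable_cb {f : UG → ℂ} (hf : Continuous f) (C : ℝ) (hC : ∀ Y, ‖f Y‖ ≤ C) :
    Integrable f μ :=
  ⟨hf.aestronglyMeasurable, HasFiniteIntegral.of_bounded (C := C) (ae_of_all μ hC)⟩

theorem integrable_entmul (i j k l : Fin n) :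
    Integrable (fun Y : UG => (Y : M') i j * (starRingEnd ℂ) ((Y : M') k l)) μ := by
  refine integrable_cb μ ?_ 1 ?_
  · exact (cont_ent i j).mul (Complex.continuous_conj.comp (cont_ent k l))
  · intro Y
    rw [norm_mul, RCLike.norm_conj]
    calc ‖(Y : M') i j‖ * ‖(Y : M') k l‖ ≤ 1 * 1 :=
          mul_le_mul (ent_norm_le Y i j) (ent_norm_le Y k l) (norm_nonneg _) zero_le_one
      _ = 1 := by ring

theorem tr_zero : ∫ Y : UG, Matrix.trace (Y : M') ∂μ = 0 := by
  have hg : (-1 : M') ∈ Matrix.unitaryGroup (Fin n) ℂ := by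
    rw [Matrix.mem_unitaryGroup_iff]; simp
  have h := integral_mul_left_eq_self (μ := μ)
    (fun Y : UG => Matrix.trace (Y : M')) ⟨-1, hg⟩
  have h2 : ∀ Y : UG, Matrix.trace (((⟨-1, hg⟩ : UG) * Y : UG) : M')
      = - Matrix.trace (Y : M') := by
    intro Y
    have : (((⟨-1, hg⟩ : UG) * Y : UG) : M') = -(Y : M') := by
      push_cast [Submonoid.coe_mul]
      simp
    rw [this, Matrix.trace_neg]
  simp_rw [h2, integral_neg] at h
  linear_combination (-1/2 : ℂ) * h

theorem cross_zero (i j : Fin n) (hij : i ≠ j) :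
    ∫ Y : UG, ((Y : M') i i * (starRingEnd ℂ) ((Y : M') j j)) ∂μ = 0 := by
  set d : Fin n → ℂ := fun k => if k = i then -1 else 1 with hd
  have hmem : Matrix.diagonal d ∈ Matrix.unitaryGroup (Fin n) ℂ := by
    rw [Matrix.mem_unitaryGroup_iff, Matrix.star_eq_conjTranspose,
      Matrix.diagonal_conjTranspose, Matrix.diagonal_mul_diagonal]
    have hk : ∀ k, d k * (starRingEnd ℂ) (d k) = 1 := by
      intro k; by_cases h : k = i <;> simp [hd, h]
    simp [Pi.star_apply, hk]
  have h := integral_mul_left_eq_self (μ := μ)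
    (fun Y : UG => (Y : M') i i * (starRingEnd ℂ) ((Y : M') j j)) ⟨Matrix.diagonal d, hmem⟩
  have h2 : ∀ Y : UG,
      (((⟨Matrix.diagonal d, hmem⟩ : UG) * Y : UG) : M') i i *
        (starRingEnd ℂ) ((((⟨Matrix.diagonal d, hmem⟩ : UG) * Y : UG) : M') j j)
      = -((Y : M') i i * (starRingEnd ℂ) ((Y : M') j j)) := by
    intro Y
    have hco : (((⟨Matrix.diagonal d, hmem⟩ : UG) * Y : UG) : M')
        = Matrix.diagonal d * (Y : M') := rfl
    rw [hco, Matrix.diagonal_mul, Matrix.diagonal_mul]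
    have hdi : d i = -1 := by simp [hd]
    have hdj : d j = 1 := by simp [hd, hij.symm]
    rw [hdi, hdj, one_mul]
    ring
  simp_rw [h2, integral_neg] at h
  linear_combination (-1/2 : ℂ) * h

theorem perm_unitary (σ : Equiv.Perm (Fin n)) : σ.permMatrix ℂ ∈ Matrix.unitaryGroup (Fin n) ℂ := by
  have hc : (σ.permMatrix ℂ)ᴴ = σ⁻¹.permMatrix ℂ := by
    have ht : (σ.permMatrix ℂ)ᵀ = σ⁻¹.permMatrix ℂ := by
      rw [Equiv.Perm.permMatrix, ← PEquiv.toMatrix_symm, ← Equiv.toPEquiv_symm]; rfl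
    rw [Matrix.conjTranspose, ht]
    ext i j
    simp [Equiv.Perm.permMatrix, PEquiv.toMatrix_apply]
  constructor
  · rw [Matrix.star_eq_conjTranspose, hc, Equiv.Perm.permMatrix, Equiv.Perm.permMatrix,
      ← PEquiv.toMatrix_trans, ← Equiv.toPEquiv_trans]
    have : (σ⁻¹ : Equiv.Perm (Fin n)).trans σ = Equiv.refl (Fin n) := by ext x; simp
    rw [this, Equiv.toPEquiv_refl, PEquiv.toMatrix_refl]
  · rw [Matrix.star_eq_conjTranspose, hc, Equiv.Perm.permMatrix, Equiv.Perm.permMatrix,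
      ← PEquiv.toMatrix_trans, ← Equiv.toPEquiv_trans]
    have : (σ : Equiv.Perm (Fin n)).trans σ⁻¹ = Equiv.refl (Fin n) := by ext x; simp
    rw [this, Equiv.toPEquiv_refl, PEquiv.toMatrix_refl]

theorem swap_row (hn : 0 < n) (i : Fin n) :
    ∫ Y : UG, ((Y : M') i i * (starRingEnd ℂ) ((Y : M') i i)) ∂μ
      = ∫ Y : UG, ((Y : M') ⟨0, hn⟩ i * (starRingEnd ℂ) ((Y : M') ⟨0, hn⟩ i)) ∂μ := by
  set i0 : Fin n := ⟨0, hn⟩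
  set σ : Equiv.Perm (Fin n) := Equiv.swap i0 i
  have hmem : σ.permMatrix ℂ ∈ Matrix.unitaryGroup (Fin n) ℂ := perm_unitary σ
  have h := integral_mul_left_eq_self (μ := μ)
    (fun Y : UG => (Y : M') i0 i * (starRingEnd ℂ) ((Y : M') i0 i)) ⟨σ.permMatrix ℂ, hmem⟩
  have h2 : ∀ Y : UG,
      (((⟨σ.permMatrix ℂ, hmem⟩ : UG) * Y : UG) : M') i0 i
        = (Y : M') i i := by
    intro Y
    have hco : (((⟨σ.permMatrix ℂ, hmem⟩ : UG) * Y : UG) : M') = σ.permMatrix ℂ * (Y : M') := rfl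
    rw [hco, Equiv.Perm.permMatrix, PEquiv.toMatrix_toPEquiv_mul]
    simp [σ, Matrix.submatrix_apply, Equiv.swap_apply_left]
  simp_rw [h2] at h
  exact h

theorem row_sum_one (Y : UG) (i0 : Fin n) :
    ∑ k, (Y : M') i0 k * (starRingEnd ℂ) ((Y : M') i0 k) = 1 := by
  have h2 := Y.2.2
  have h : ((Y : M') * star (Y : M')) i0 i0 = 1 := by rw [h2]; simp
  rw [Matrix.mul_apply] at h
  simp only [Matrix.star_apply, Complex.star_def] at h
  exact h

theorem integrable_tr : Integrable (fun Y : UG => Matrix.trace (Y : M')) μ := by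
  refine integrable_cb μ ?_ n ?_
  · exact Continuous.matrix_trace continuous_subtype_val
  · intro Y
    rw [Matrix.trace]
    calc ‖∑ i, (Y : M').diag i‖ ≤ ∑ i, ‖(Y : M').diag i‖ := norm_sum_le _ _
      _ ≤ ∑ _i : Fin n, (1 : ℝ) := Finset.sum_le_sum (fun i _ => ent_norm_le Y i i)
      _ = n := by simp

theorem second_moment (hn : 0 < n) :
    ∫ Y : UG, (Matrix.trace (Y : M') * (starRingEnd ℂ) (Matrix.trace (Y : M'))) ∂μ = 1 := by
  have expand : ∀ Y : UG, Matrix.trace (Y : M') * (starRingEnd ℂ) (Matrix.trace (Y : M'))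
      = ∑ i, ∑ j, ((Y : M') i i * (starRingEnd ℂ) ((Y : M') j j)) := by
    intro Y
    rw [Matrix.trace, map_sum, Finset.sum_mul_sum]
    rfl
  simp_rw [expand]
  rw [integral_finset_sum _ (fun i _ => integrable_finset_sum _
    (fun j _ => integrable_entmul μ i i j j))]
  simp_rw [integral_finset_sum _ (fun j _ => integrable_entmul μ _ _ j j)]
  have hdiag : ∀ i : Fin n, ∑ j, ∫ Y : UG, ((Y : M') i i * (starRingEnd ℂ) ((Y : M') j j)) ∂μ
      = ∫ Y : UG, ((Y : M') ⟨0, hn⟩ i * (starRingEnd ℂ) ((Y : M') ⟨0, hn⟩ i)) ∂μ := by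
    intro i
    rw [Finset.sum_eq_single i]
    · rw [swap_row μ hn i]
    · intro j _ hj
      exact cross_zero μ i j (fun hh => hj (hh ▸ rfl))
    · intro hi; exact absurd (Finset.mem_univ i) hi
  simp_rw [hdiag]
  rw [← integral_finset_sum _ (fun i _ => integrable_entmul μ ⟨0, hn⟩ i ⟨0, hn⟩ i)]
  have hone : ∀ Y : UG,
      ∑ i, ((Y : M') ⟨0, hn⟩ i * (starRingEnd ℂ) ((Y : M') ⟨0, hn⟩ i)) = (1 : ℂ) :=
    fun Y => row_sum_one Y ⟨0, hn⟩
  simp_rw [hone]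
  simp

theorem tr_norm_le (Y : UG) : ‖Matrix.trace (Y : M')‖ ≤ n := by
  rw [Matrix.trace]
  calc ‖∑ i, (Y : M').diag i‖ ≤ ∑ i, ‖(Y : M').diag i‖ := norm_sum_le _ _
    _ ≤ ∑ _i : Fin n, (1 : ℝ) := Finset.sum_le_sum (fun i _ => ent_norm_le Y i i)
    _ = n := by simp

theorem cont_tr : Continuous (fun Y : UG => Matrix.trace (Y : M')) :=
  Continuous.matrix_trace continuous_subtype_val

theorem integrable_full (a : ℂ) :
    Integrable (fun Y : UG =>
      (a + Matrix.trace (Y : M')) * (starRingEnd ℂ) (a + Matrix.trace (Y : M'))) μ := by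
  refine integrable_cb μ ?_ ((‖a‖ + n) ^ 2) ?_
  · exact ((continuous_const.add cont_tr).mul
      (Complex.continuous_conj.comp (continuous_const.add cont_tr)))
  · intro Y
    rw [norm_mul, RCLike.norm_conj, ← sq]
    have h1 : ‖a + Matrix.trace (Y : M')‖ ≤ ‖a‖ + n :=
      le_trans (norm_add_le _ _) (by linarith [tr_norm_le Y])
    exact pow_le_pow_left₀ (norm_nonneg _) h1 2

theorem key (hn : 0 < n) (a : ℂ) :
    ∫ Y : UG, Complex.normSq (a + Matrix.trace (Y : M')) ∂μ = Complex.normSq a + 1 := by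
  have i1 : Integrable (fun Y : UG => a * (starRingEnd ℂ) (Matrix.trace (Y : M'))) μ := by
    refine integrable_cb μ (continuous_const.mul (Complex.continuous_conj.comp cont_tr))
      (‖a‖ * n) ?_
    intro Y
    rw [norm_mul, RCLike.norm_conj]
    exact mul_le_mul_of_nonneg_left (tr_norm_le Y) (norm_nonneg a)
  have i2 : Integrable (fun Y : UG => Matrix.trace (Y : M') * (starRingEnd ℂ) a) μ := by
    refine integrable_cb μ (cont_tr.mul continuous_const) (n * ‖a‖) ?_
    intro Y
    rw [norm_mul, RCLike.norm_conj]
    exact mul_le_mul_of_nonneg_right (tr_norm_le Y) (norm_nonneg a)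
  have i3 : Integrable (fun Y : UG =>
      Matrix.trace (Y : M') * (starRingEnd ℂ) (Matrix.trace (Y : M'))) μ := by
    refine integrable_cb μ (cont_tr.mul (Complex.continuous_conj.comp cont_tr)) ((n : ℝ) * n) ?_
    intro Y
    rw [norm_mul, RCLike.norm_conj]
    exact mul_le_mul (tr_norm_le Y) (tr_norm_le Y) (norm_nonneg _) (Nat.cast_nonneg n)
  have hS : ∫ Y : UG, ((a + Matrix.trace (Y : M')) *
      (starRingEnd ℂ) (a + Matrix.trace (Y : M'))) ∂μ = (Complex.normSq a : ℂ) + 1 := by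
    have hexp : ∀ Y : UG, (a + Matrix.trace (Y : M')) *
        (starRingEnd ℂ) (a + Matrix.trace (Y : M'))
        = a * (starRingEnd ℂ) a + (a * (starRingEnd ℂ) (Matrix.trace (Y : M'))
          + (Matrix.trace (Y : M') * (starRingEnd ℂ) a
            + Matrix.trace (Y : M') * (starRingEnd ℂ) (Matrix.trace (Y : M')))) := by
      intro Y; rw [map_add]; ring
    have i23 : Integrable (fun Y : UG => Matrix.trace (Y : M') * (starRingEnd ℂ) a
        + Matrix.trace (Y : M') * (starRingEnd ℂ) (Matrix.trace (Y : M'))) μ := i2.add i3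
    have i123 : Integrable (fun Y : UG => a * (starRingEnd ℂ) (Matrix.trace (Y : M'))
        + (Matrix.trace (Y : M') * (starRingEnd ℂ) a
          + Matrix.trace (Y : M') * (starRingEnd ℂ) (Matrix.trace (Y : M')))) μ := i1.add i23
    simp_rw [hexp]
    rw [integral_add (integrable_const _) i123, integral_add i1 i23, integral_add i2 i3]
    have e1 : ∫ _Y : UG, a * (starRingEnd ℂ) a ∂μ = (Complex.normSq a : ℂ) := by
      rw [integral_const, probReal_univ]; simp [Complex.mul_conj]
    have e2 : ∫ Y : UG, a * (starRingEnd ℂ) (Matrix.trace (Y : M')) ∂μ = 0 := by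
      rw [integral_const_mul, integral_conj, tr_zero]
      simp
    have e3 : ∫ Y : UG, Matrix.trace (Y : M') * (starRingEnd ℂ) a ∂μ = 0 := by
      rw [integral_mul_const, tr_zero, zero_mul]
    rw [e1, e2, e3, second_moment μ hn]
    ring
  have hre : ∀ Y : UG, Complex.normSq (a + Matrix.trace (Y : M'))
      = ((a + Matrix.trace (Y : M')) * (starRingEnd ℂ) (a + Matrix.trace (Y : M'))).re := by
    intro Y; rw [Complex.mul_conj, Complex.ofReal_re]
  have h4 := integral_re (integrable_full μ a)
  rw [hS] at h4
  simp only [RCLike.re_to_complex] at h4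
  simp_rw [hre]
  rw [h4]
  simp

theorem integrable_normSq (a : ℂ) :
    Integrable (fun Y : UG => Complex.normSq (a + Matrix.trace (Y : M'))) μ := by
  have this' := (integrable_full μ a).re
  have this : Integrable (fun Y : UG => ((a + Matrix.trace (Y : M')) *
      (starRingEnd ℂ) (a + Matrix.trace (Y : M'))).re) μ := this'
  have hre : ∀ Y : UG, ((a + Matrix.trace (Y : M')) *
      (starRingEnd ℂ) (a + Matrix.trace (Y : M'))).re
      = Complex.normSq (a + Matrix.trace (Y : M')) := by
    intro Y; rw [Complex.mul_conj, Complex.ofReal_re]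
  exact this.congr (ae_of_all μ hre)
end



open MeasureTheory Matrix in
/-- NFL lower bound for learning an `N`-dimensional unitary from `t` perfectly learned
orthonormal training states: with `U†V = e^{iθ₁}⊕…⊕e^{iθ_t}⊕Y` and `Y` Haar-random on the
complement, the average of the risk `1 − (N + |tr(U†V)|²)/(N(N+1))` over `Y` is at least
`1 − (N + t² + 1)/(N(N+1))`. -/
theorem nfl_average_risk_lower_bound (N t : ℕ) (htN : t < N)
    [MeasurableSpace (Matrix.unitaryGroup (Fin (N - t)) ℂ)]
    [BorelSpace (Matrix.unitaryGroup (Fin (N - t)) ℂ)]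
    (μ : Measure (Matrix.unitaryGroup (Fin (N - t)) ℂ))
    [μ.IsHaarMeasure] [IsProbabilityMeasure μ]
    (θ : Fin t → ℝ) :
    1 - ((N : ℝ) + t ^ 2 + 1) / (N * (N + 1)) ≤
      ∫ Y : Matrix.unitaryGroup (Fin (N - t)) ℂ,
        (1 - ((N : ℝ) +
          ‖(∑ j, Complex.exp (θ j * Complex.I)) +
            Matrix.trace (Y : Matrix (Fin (N - t)) (Fin (N - t)) ℂ)‖ ^ 2) /
          (N * (N + 1))) ∂μ := by
  have hn : 0 < N - t := Nat.sub_pos_of_lt htN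
  have hN : (0 : ℝ) < N := by exact_mod_cast lt_of_le_of_lt (Nat.zero_le t) htN
  set a : ℂ := ∑ j, Complex.exp (θ j * Complex.I) with ha_def
  have ha : ‖a‖ ≤ t := by
    calc ‖a‖ ≤ ∑ j, ‖Complex.exp (θ j * Complex.I)‖ :=
          norm_sum_le _ _
      _ = ∑ _j : Fin t, (1 : ℝ) := by
          refine Finset.sum_congr rfl fun j _ => ?_
          exact Complex.norm_exp_ofReal_mul_I (θ j)
      _ = t := by simp
  set D : ℝ := (N : ℝ) * (N + 1) with hD_def
  have hD : 0 < D := by positivity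
  have habs : ∀ Y : Matrix.unitaryGroup (Fin (N - t)) ℂ,
      (1 - ((N : ℝ) + ‖a +
        Matrix.trace (Y : Matrix (Fin (N - t)) (Fin (N - t)) ℂ)‖ ^ 2) / D)
      = (1 - (N : ℝ) / D) - Complex.normSq (a +
          Matrix.trace (Y : Matrix (Fin (N - t)) (Fin (N - t)) ℂ)) * D⁻¹ := by
    intro Y
    rw [Complex.sq_norm, add_div]
    ring
  simp_rw [habs]
  rw [integral_sub (integrable_const _) ((integrable_normSq μ a).mul_const _),
    integral_const, integral_mul_const, key μ hn a, probReal_univ]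
  have hsq : Complex.normSq a ≤ (t : ℝ) ^ 2 := by
    rw [← Complex.sq_norm]
    exact pow_le_pow_left₀ (norm_nonneg a) ha 2
  rw [one_smul]
  have h3 : ((N : ℝ) + (t : ℝ) ^ 2 + 1) / D = (N : ℝ) / D + ((t : ℝ) ^ 2 + 1) * D⁻¹ := by
    rw [div_eq_mul_inv, div_eq_mul_inv]; ring
  rw [h3]
  have h2 : (Complex.normSq a + 1) * D⁻¹ ≤ ((t : ℝ) ^ 2 + 1) * D⁻¹ := by
    apply mul_le_mul_of_nonneg_right _ (inv_nonneg.mpr hD.le)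
    linarith
  linarith
end

section
/- In the entanglement-assisted setting where each of t linearly independent training states has Schmidt rank r and is learned perfectly, so that U†V = e^{iθ}I_{rt} ⊕ Y with Y Haar-random on U(N−rt), the average risk equals exactly 1 − (N + r²t² + 1)/(N(N+1)). -/
open MeasureTheory Matrix Complex

namespace NFLAux

instance (n : ℕ) : SecondCountableTopology (Matrix.unitaryGroup (Fin n) ℂ) :=
  haveI : SecondCountableTopology (Matrix (Fin n) (Fin n) ℂ) :=
    (inferInstance : SecondCountableTopology (Fin n → Fin n → ℂ))
  TopologicalSpace.secondCountableTopology_induced _ _ (Subtype.val)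

set_option linter.unusedSectionVars false

variable {n : ℕ} [MeasurableSpace (Matrix.unitaryGroup (Fin n) ℂ)]
  [BorelSpace (Matrix.unitaryGroup (Fin n) ℂ)]
  (μ : Measure (Matrix.unitaryGroup (Fin n) ℂ)) [μ.IsHaarMeasure] [IsProbabilityMeasure μ]

local notation "G" => Matrix.unitaryGroup (Fin n) ℂ
local notation "M" => Matrix (Fin n) (Fin n) ℂ

lemma contEntry (i j : Fin n) : Continuous fun Y : G => (Y : M) i j :=
  (continuous_apply j).comp ((continuous_apply i).comp continuous_subtype_val)

lemma intBdd {E : Type*} [NormedAddCommGroup E] [NormedSpace ℝ E] {f : (Matrix.unitaryGroup (Fin n) ℂ) → E}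
    (hf : Continuous f) (C : ℝ) (hC : ∀ Y, ‖f Y‖ ≤ C) : Integrable f μ :=
  memLp_one_iff_integrable.mp (MemLp.of_bound hf.aestronglyMeasurable C (ae_of_all _ hC))

lemma entryBdd (Y : G) (i j : Fin n) : ‖(Y : M) i j‖ ≤ 1 :=
  entry_norm_bound_of_unitary Y.2 i j

lemma permUnitary (σ : Equiv.Perm (Fin n)) :
    (σ.toPEquiv.toMatrix : M) ∈ Matrix.unitaryGroup (Fin n) ℂ := by
  rw [Matrix.mem_unitaryGroup_iff]
  have hstar : star (σ.toPEquiv.toMatrix : M) = (σ.symm.toPEquiv.toMatrix : M) := by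
    ext a b
    simp [Matrix.star_apply, PEquiv.toMatrix_apply, Equiv.toPEquiv_apply,
      apply_ite (star : ℂ → ℂ), Equiv.eq_symm_apply, eq_comm]
  rw [hstar, ← PEquiv.toMatrix_trans, ← Equiv.toPEquiv_trans, Equiv.self_trans_symm,
    Equiv.toPEquiv_refl, PEquiv.toMatrix_refl]

lemma intProd (i j : Fin n) :
    Integrable (fun Y : G => (Y : M) i i * (starRingEnd ℂ) ((Y : M) j j)) μ := by
  refine intBdd μ ((contEntry i i).mul (Complex.continuous_conj.comp (contEntry j j))) 1
    (fun Y => ?_)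
  rw [norm_mul, RCLike.norm_conj]
  have h1 := entryBdd Y i i
  have h2 := entryBdd Y j j
  nlinarith [norm_nonneg ((Y : M) i i), norm_nonneg ((Y : M) j j)]

lemma offdiag (i j : Fin n) (hij : j ≠ i) :
    ∫ Y : G, ((Y : M) i i * (starRingEnd ℂ) ((Y : M) j j)) ∂μ = 0 := by
  set d : Fin n → ℂ := fun a => if a = i then -1 else 1 with hd
  have hmem : Matrix.diagonal d ∈ Matrix.unitaryGroup (Fin n) ℂ := by
    rw [Matrix.mem_unitaryGroup_iff, Matrix.star_eq_conjTranspose,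
      Matrix.diagonal_conjTranspose, Matrix.diagonal_mul_diagonal]
    have : (fun a => d a * star d a) = fun _ => (1 : ℂ) := by
      funext a
      by_cases h : a = i <;> simp [hd, h]
    rw [this, Matrix.diagonal_one]
  set g : G := ⟨Matrix.diagonal d, hmem⟩ with hg
  have h := integral_mul_left_eq_self (μ := μ)
    (fun Y : G => ((Y : M) i i * (starRingEnd ℂ) ((Y : M) j j))) g
  have key : ∀ Y : G, ((g * Y : G) : M) i i * (starRingEnd ℂ) (((g * Y : G) : M) j j)
      = -(((Y : M) i i) * (starRingEnd ℂ) ((Y : M) j j)) := by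
    intro Y
    have hc : ((g * Y : G) : M) = Matrix.diagonal d * (Y : M) := rfl
    rw [hc, Matrix.diagonal_mul, Matrix.diagonal_mul]
    simp [hd, hij]
  simp only [key, integral_neg] at h
  linear_combination -h/2

lemma colEntry (a b : Fin n) :
    ∫ Y : G, Complex.normSq ((Y : M) a b) ∂μ = ∫ Y : G, Complex.normSq ((Y : M) b b) ∂μ := by
  set σ : Equiv.Perm (Fin n) := Equiv.swap b a with hσ
  set g : G := ⟨σ.toPEquiv.toMatrix, permUnitary σ⟩ with hg
  have h := integral_mul_left_eq_self (μ := μ)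
    (fun Y : G => Complex.normSq ((Y : M) b b)) g
  have key : ∀ Y : G, Complex.normSq (((g * Y : G) : M) b b) = Complex.normSq ((Y : M) a b) := by
    intro Y
    have hc : ((g * Y : G) : M) = σ.toPEquiv.toMatrix * (Y : M) := rfl
    rw [hc, PEquiv.toMatrix_toPEquiv_mul]
    simp [hσ, Matrix.submatrix_apply, Equiv.swap_apply_left]
  simp only [key] at h
  exact h

lemma colSum (Y : G) (b : Fin n) : ∑ a, Complex.normSq ((Y : M) a b) = 1 := by
  have h : (star (Y : M) * (Y : M)) b b = 1 := by
    rw [Matrix.mem_unitaryGroup_iff'.mp Y.2, Matrix.one_apply_eq]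
  rw [Matrix.mul_apply] at h
  have h2 : ((∑ a, Complex.normSq ((Y : M) a b) : ℝ) : ℂ) = 1 := by
    push_cast
    rw [← h]
    refine Finset.sum_congr rfl fun a _ => ?_
    rw [Matrix.star_apply, Complex.star_def, ← Complex.normSq_eq_conj_mul_self]
  exact_mod_cast h2

lemma intSq (a b : Fin n) : Integrable (fun Y : G => Complex.normSq ((Y : M) a b)) μ := by
  refine intBdd μ (Complex.continuous_normSq.comp (contEntry a b)) 1 (fun Y => ?_)
  have h := entryBdd Y a b
  rw [Real.norm_eq_abs, _root_.abs_of_nonneg (Complex.normSq_nonneg _),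
    Complex.normSq_eq_norm_sq]
  nlinarith [norm_nonneg ((Y : M) a b)]

lemma diagSq (hn : 0 < n) (b : Fin n) :
    ∫ Y : G, Complex.normSq ((Y : M) b b) ∂μ = 1 / n := by
  have hsum : ∫ Y : G, (∑ a, Complex.normSq ((Y : M) a b)) ∂μ = 1 := by
    simp only [colSum]
    simp
  rw [integral_finset_sum _ (fun a _ => intSq μ a b)] at hsum
  rw [Finset.sum_congr rfl (fun a _ => colEntry μ a b), Finset.sum_const, Finset.card_univ,
    Fintype.card_fin, nsmul_eq_mul] at hsum
  have hn' : (n : ℝ) ≠ 0 := Nat.cast_ne_zero.mpr hn.ne'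
  field_simp
  linarith [hsum]

lemma diagC (hn : 0 < n) (i : Fin n) :
    ∫ Y : G, ((Y : M) i i * (starRingEnd ℂ) ((Y : M) i i)) ∂μ = ((1 / n : ℝ) : ℂ) := by
  have h : ∀ Y : G, (Y : M) i i * (starRingEnd ℂ) ((Y : M) i i)
      = ((Complex.normSq ((Y : M) i i) : ℝ) : ℂ) := fun Y => Complex.mul_conj _
  simp only [h]
  have h2 := Complex.ofRealCLM.integral_comp_comm (intSq μ i i)
  simp only [Complex.ofRealCLM_apply] at h2
  rw [h2, diagSq μ hn i]

lemma traceZero : ∫ Y : G, Matrix.trace (Y : M) ∂μ = 0 := by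
  have hmem : (-1 : M) ∈ Matrix.unitaryGroup (Fin n) ℂ := by
    rw [Matrix.mem_unitaryGroup_iff]; simp
  set g : G := ⟨-1, hmem⟩ with hg
  have h := integral_mul_left_eq_self (μ := μ) (fun Y : G => Matrix.trace (Y : M)) g
  have key : ∀ Y : G, Matrix.trace ((g * Y : G) : M) = -Matrix.trace (Y : M) := by
    intro Y
    have hc : ((g * Y : G) : M) = (-1 : M) * (Y : M) := rfl
    rw [hc]; simp
  simp only [key, integral_neg] at h
  linear_combination -h/2

lemma traceSqC (hn : 0 < n) :
    ∫ Y : G, (Matrix.trace (Y : M) * (starRingEnd ℂ) (Matrix.trace (Y : M))) ∂μ = 1 := by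
  have expand : ∀ Y : G, Matrix.trace (Y : M) * (starRingEnd ℂ) (Matrix.trace (Y : M))
      = ∑ i, ∑ j, (Y : M) i i * (starRingEnd ℂ) ((Y : M) j j) := by
    intro Y
    simp only [Matrix.trace, Matrix.diag, map_sum, Finset.sum_mul, Finset.mul_sum]
    rw [Finset.sum_comm]
  simp only [expand]
  rw [integral_finset_sum _ (fun i _ => integrable_finset_sum _ (fun j _ => intProd μ i j))]
  have inner : ∀ i : Fin n,
      ∫ Y : G, (∑ j, (Y : M) i i * (starRingEnd ℂ) ((Y : M) j j)) ∂μ = ((1 / n : ℝ) : ℂ) := by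
    intro i
    rw [integral_finset_sum _ (fun j _ => intProd μ i j), Finset.sum_eq_single i]
    · exact diagC μ hn i
    · intro j _ hj
      exact offdiag μ i j hj
    · simp
  rw [Finset.sum_congr rfl (fun i _ => inner i), Finset.sum_const, Finset.card_univ,
    Fintype.card_fin, nsmul_eq_mul]
  have hn' : (n : ℂ) ≠ 0 := Nat.cast_ne_zero.mpr hn.ne'
  push_cast
  field_simp

lemma contTrace : Continuous fun Y : G => Matrix.trace (Y : M) := by
  have : (fun Y : G => Matrix.trace (Y : M)) = fun Y : G => ∑ i, (Y : M) i i := by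
    funext Y; simp [Matrix.trace, Matrix.diag]
  rw [this]
  exact continuous_finset_sum _ fun i _ => contEntry i i

lemma traceBdd (Y : G) : ‖Matrix.trace (Y : M)‖ ≤ n := by
  have : Matrix.trace (Y : M) = ∑ i, (Y : M) i i := by simp [Matrix.trace, Matrix.diag]
  rw [this]
  calc ‖∑ i, (Y : M) i i‖ ≤ ∑ i, ‖(Y : M) i i‖ := norm_sum_le _ _
  _ ≤ ∑ _i : Fin n, (1 : ℝ) := Finset.sum_le_sum fun i _ => entryBdd Y i i
  _ = n := by simp

lemma keyIntegral (hn : 0 < n) (c : ℂ) :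
    ∫ Y : G, Complex.normSq (c + Matrix.trace (Y : M)) ∂μ = Complex.normSq c + 1 := by
  have hTint : Integrable (fun Y : G => Matrix.trace (Y : M)) μ :=
    intBdd μ (contTrace) n (fun Y => traceBdd Y)
  have hint1 : Integrable (fun Y : G => (c * (starRingEnd ℂ) (Matrix.trace (Y : M)))) μ := by
    refine intBdd μ (continuous_const.mul (Complex.continuous_conj.comp contTrace)) (‖c‖ * n)
      (fun Y => ?_)
    rw [norm_mul, RCLike.norm_conj]
    exact mul_le_mul_of_nonneg_left (traceBdd Y) (norm_nonneg c)
  have hint2 : Integrable (fun Y : G => Complex.normSq (Matrix.trace (Y : M))) μ := by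
    refine intBdd μ (Complex.continuous_normSq.comp contTrace) ((n : ℝ) ^ 2) (fun Y => ?_)
    rw [Real.norm_eq_abs, _root_.abs_of_nonneg (Complex.normSq_nonneg _),
      Complex.normSq_eq_norm_sq]
    have := traceBdd Y
    nlinarith [norm_nonneg (Matrix.trace (Y : M))]
  have expand : ∀ Y : G, Complex.normSq (c + Matrix.trace (Y : M))
      = Complex.normSq c + (2 * (c * (starRingEnd ℂ) (Matrix.trace (Y : M))).re
        + Complex.normSq (Matrix.trace (Y : M))) := by
    intro Y
    rw [Complex.normSq_add]; ring
  simp only [expand]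
  have hre : Integrable (fun Y : G => (c * (starRingEnd ℂ) (Matrix.trace (Y : M))).re) μ :=
    hint1.re
  have hg : Integrable (fun Y : G => 2 * (c * (starRingEnd ℂ) (Matrix.trace (Y : M))).re
      + Complex.normSq (Matrix.trace (Y : M))) μ := (hre.const_mul 2).add hint2
  rw [integral_add (integrable_const _) hg, integral_add (hre.const_mul 2) hint2,
    integral_const, probReal_univ, one_smul]
  have h0 : ∫ Y : G, (c * (starRingEnd ℂ) (Matrix.trace (Y : M))) ∂μ = 0 := by
    rw [integral_const_mul, integral_conj, traceZero]
    simp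
  have h1 : ∫ Y : G, (c * (starRingEnd ℂ) (Matrix.trace (Y : M))).re ∂μ = 0 := by
    have h1' := Complex.reCLM.integral_comp_comm hint1
    simp only [Complex.reCLM_apply] at h1'
    rw [h1', h0]
    simp
  have h2 : ∫ Y : G, Complex.normSq (Matrix.trace (Y : M)) ∂μ = 1 := by
    have e : ∀ Y : G, Complex.normSq (Matrix.trace (Y : M))
        = ((Matrix.trace (Y : M)) * (starRingEnd ℂ) (Matrix.trace (Y : M))).re := by
      intro Y; rw [Complex.mul_conj]; simp
    simp only [e]
    have hintT2 : Integrable (fun Y : G =>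
        (Matrix.trace (Y : M)) * (starRingEnd ℂ) (Matrix.trace (Y : M))) μ := by
      refine intBdd μ (contTrace.mul (Complex.continuous_conj.comp contTrace)) ((n : ℝ) ^ 2)
        fun Y => ?_
      rw [norm_mul, RCLike.norm_conj]
      have := traceBdd Y
      nlinarith [norm_nonneg (Matrix.trace (Y : M))]
    have h2' := Complex.reCLM.integral_comp_comm hintT2
    simp only [Complex.reCLM_apply] at h2'
    rw [h2', traceSqC μ hn]
    simp
  rw [integral_const_mul, h1, h2]
  ring

end NFLAux

open MeasureTheory Matrix in
/-- Entanglement-assisted NFL: with `t` linearly independent training states of Schmidt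
rank `r` learned perfectly, so that `U†V = e^{iθ}I_{rt} ⊕ Y` with `Y` Haar-random on
`U(N−rt)`, the average risk `1 − (N + |tr(U†V)|²)/(N(N+1))` equals exactly
`1 − (N + r²t² + 1)/(N(N+1))`. -/
theorem nfl_entanglement_average_risk (N r t : ℕ) (hr : 0 < r) (ht : 0 < t)
    (hrt : r * t < N)
    [MeasurableSpace (Matrix.unitaryGroup (Fin (N - r * t)) ℂ)]
    [BorelSpace (Matrix.unitaryGroup (Fin (N - r * t)) ℂ)]
    (μ : Measure (Matrix.unitaryGroup (Fin (N - r * t)) ℂ))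
    [μ.IsHaarMeasure] [IsProbabilityMeasure μ]
    (θ : ℝ) :
    ∫ Y : Matrix.unitaryGroup (Fin (N - r * t)) ℂ,
        (1 - ((N : ℝ) +
          ‖(r * t : ℕ) * Complex.exp (θ * Complex.I) +
            Matrix.trace (Y : Matrix (Fin (N - r * t)) (Fin (N - r * t)) ℂ)‖ ^ 2) /
          (N * (N + 1))) ∂μ =
      1 - ((N : ℝ) + r ^ 2 * t ^ 2 + 1) / (N * (N + 1)) := by
  have hN : 0 < N := lt_of_le_of_lt (Nat.zero_le _) hrt
  have hn : 0 < N - r * t := Nat.sub_pos_of_lt hrt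
  set c : ℂ := ((r * t : ℕ) : ℂ) * Complex.exp ((θ : ℝ) * Complex.I) with hc
  have key := NFLAux.keyIntegral μ hn c
  have hNpos : (0 : ℝ) < N := by exact_mod_cast hN
  have hD1 : (N : ℝ) ≠ 0 := ne_of_gt hNpos
  have hD2 : (N : ℝ) + 1 ≠ 0 := by positivity
  have rewr : ∀ Y : Matrix.unitaryGroup (Fin (N - r * t)) ℂ,
      (1 - ((N : ℝ) + ‖c +
          Matrix.trace (Y : Matrix (Fin (N - r * t)) (Fin (N - r * t)) ℂ)‖ ^ 2) /
        ((N : ℝ) * ((N : ℝ) + 1)))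
      = (1 - (N : ℝ) / ((N : ℝ) * ((N : ℝ) + 1)))
        - Complex.normSq (c +
            Matrix.trace (Y : Matrix (Fin (N - r * t)) (Fin (N - r * t)) ℂ))
          * ((N : ℝ) * ((N : ℝ) + 1))⁻¹ := by
    intro Y
    rw [Complex.sq_norm]
    field_simp
    ring
  simp only [rewr]
  have hintg : Integrable (fun Y : Matrix.unitaryGroup (Fin (N - r * t)) ℂ =>
      Complex.normSq (c +
        Matrix.trace (Y : Matrix (Fin (N - r * t)) (Fin (N - r * t)) ℂ))) μ := by
    refine NFLAux.intBdd μ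
      (Complex.continuous_normSq.comp (continuous_const.add NFLAux.contTrace))
      ((‖c‖ + ((N - r * t : ℕ) : ℝ)) ^ 2) fun Y => ?_
    rw [Real.norm_eq_abs, _root_.abs_of_nonneg (Complex.normSq_nonneg _),
      Complex.normSq_eq_norm_sq]
    have h1 := norm_add_le c (Matrix.trace (Y : Matrix (Fin (N - r * t)) (Fin (N - r * t)) ℂ))
    have h2 := NFLAux.traceBdd Y
    nlinarith [norm_nonneg (c + Matrix.trace (Y : Matrix (Fin (N - r * t)) (Fin (N - r * t)) ℂ)),
      norm_nonneg c,
      norm_nonneg (Matrix.trace (Y : Matrix (Fin (N - r * t)) (Fin (N - r * t)) ℂ))]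
  rw [integral_sub (integrable_const _) (hintg.mul_const _), integral_const, probReal_univ,
    one_smul, integral_mul_const, key]
  have hc2 : Complex.normSq c = (r : ℝ) ^ 2 * (t : ℝ) ^ 2 := by
    rw [hc, Complex.normSq_mul, Complex.normSq_natCast, Complex.normSq_eq_norm_sq,
      Complex.norm_exp_ofReal_mul_I]
    push_cast
    ring
  rw [hc2]
  field_simp
  ring
end
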